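/- The commutative ring k[x, y, z]/⟨xy − z³⟩ is isomorphic to the subring of k⟨u,v⟩/⟨u²−v²⟩ generated by (uv)³, (vu)³, and u⁴, via x ↦ (uv)³, y ↦ (vu)³, z ↦ u⁴; in particular, in k⟨u,v⟩/⟨u²−v²⟩ the elements (uv)³, (vu)³, u⁴ pairwise commute and satisfy (uv)³(vu)³ = (u⁴)³. -/

import Mathlib

noncomputable section

/-- The relation imposing `u² = v²` on the free algebra `k⟨u, v⟩`. -/
def uvRel (k : Type*) [Field k] :
    FreeAlgebra k (Fin 2) → FreeAlgebra k (Fin 2) → Prop :=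
  fun p q => p = FreeAlgebra.ι k 0 * FreeAlgebra.ι k 0 ∧
    q = FreeAlgebra.ι k 1 * FreeAlgebra.ι k 1

open MvPolynomial

section AuxCommutative
variable {k : Type*} [Field k] [IsAlgClosed k] [CharZero k]

/-- `x ↦ x(X₀⁶, X₁⁶)` is injective on `k[X₀,X₁]`. -/
lemma stmt19_rho_inj (r : MvPolynomial (Fin 2) k)
    (h : aeval ![(X 0 : MvPolynomial (Fin 2) k) ^ 6, X 1 ^ 6] r = 0) : r = 0 := by
  apply MvPolynomial.funext (q := 0)
  intro x
  choose c hc using fun i => IsAlgClosed.exists_pow_nat_eq (x i) (n := 6) (by norm_num)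
  have key : (aeval c).comp (aeval (R := k) ![(X 0 : MvPolynomial (Fin 2) k) ^ 6, X 1 ^ 6])
      = aeval x := by
    rw [MvPolynomial.comp_aeval]
    congr 1
    funext i
    fin_cases i <;> simp [hc 0, hc 1]
  have := congrArg (aeval c) h
  rw [← AlgHom.comp_apply, key] at this
  simpa using this

lemma stmt19_indep (r₀ r₁ r₂ : MvPolynomial (Fin 2) k)
    (h : aeval ![(X 0 : MvPolynomial (Fin 2) k) ^ 6, X 1 ^ 6] r₀
      + aeval ![(X 0 : MvPolynomial (Fin 2) k) ^ 6, X 1 ^ 6] r₁ * (X 0 ^ 2 * X 1 ^ 2)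
      + aeval ![(X 0 : MvPolynomial (Fin 2) k) ^ 6, X 1 ^ 6] r₂ * (X 0 ^ 2 * X 1 ^ 2) ^ 2 = 0) :
    r₀ = 0 ∧ r₁ = 0 ∧ r₂ = 0 := by
  obtain ⟨ω, hω⟩ : ∃ ω : k, ω ^ 2 + ω + 1 = 0 := by
    have hdeg : (Polynomial.X ^ 2 + Polynomial.X + Polynomial.C 1 : Polynomial k).degree = 2 := by
      compute_degree!
    obtain ⟨ω, hω⟩ := IsAlgClosed.exists_root
      (Polynomial.X ^ 2 + Polynomial.X + Polynomial.C 1 : Polynomial k) (by rw [hdeg]; norm_num)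
    refine ⟨ω, ?_⟩
    have := hω
    rw [Polynomial.IsRoot.def] at this
    simpa using this
  have hω3 : ω ^ 3 = 1 := by linear_combination (ω - 1) * hω
  have hω6 : ω ^ 6 = 1 := by rw [show (6:ℕ) = 3*2 from rfl, pow_mul, hω3, one_pow]
  set ρ : MvPolynomial (Fin 2) k →ₐ[k] MvPolynomial (Fin 2) k :=
    aeval ![(X 0 : MvPolynomial (Fin 2) k) ^ 6, X 1 ^ 6] with hρ
  set σ : MvPolynomial (Fin 2) k →ₐ[k] MvPolynomial (Fin 2) k :=
    aeval ![C ω * X 0, C ω * X 1] with hσ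
  have hσρ : ∀ r, σ (ρ r) = ρ r := by
    intro r
    have hcomp : σ.comp ρ = ρ := by
      rw [hρ, hσ, MvPolynomial.comp_aeval]
      congr 1
      funext i
      fin_cases i <;>
        · show (aeval ![C ω * X 0, C ω * X 1]) (_ ^ 6) = _
          rw [map_pow]
          simp only [Matrix.cons_val_zero, Matrix.cons_val_one, Matrix.head_cons, aeval_X]
          rw [mul_pow, ← map_pow, hω6, map_one, one_mul]
          simp
    exact AlgHom.congr_fun hcomp r
  have hσC : ∀ x : k, σ (C x) = C x := fun x => by
    rw [hσ, aeval_C, MvPolynomial.algebraMap_eq]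
  have hσw : σ ((X 0 : MvPolynomial (Fin 2) k) ^ 2 * X 1 ^ 2)
      = C ω * (X 0 ^ 2 * X 1 ^ 2) := by
    have : (C ω * (X 0 : MvPolynomial (Fin 2) k)) ^ 2 * (C ω * X 1) ^ 2
        = C (ω ^ 4) * (X 0 ^ 2 * X 1 ^ 2) := by
      rw [map_pow]; ring
    rw [hσ]
    simp only [map_mul, map_pow, aeval_X, Matrix.cons_val_zero, Matrix.cons_val_one,
      Matrix.head_cons]
    rw [this, show ω ^ 4 = ω by linear_combination ω * hω3]
  set w : MvPolynomial (Fin 2) k := X 0 ^ 2 * X 1 ^ 2 with hwdef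
  have hCω : (C ω : MvPolynomial (Fin 2) k) ^ 2 + C ω + 1 = 0 := by
    have : ((C ω : MvPolynomial (Fin 2) k) ^ 2 + C ω + 1) = C (ω ^ 2 + ω + 1) := by
      simp [map_add, map_pow]
    rw [this, hω, map_zero]
  have E0 : ρ r₀ + ρ r₁ * w + ρ r₂ * w ^ 2 = 0 := h
  have E1 : ρ r₀ + C ω * (ρ r₁ * w) + C ω ^ 2 * (ρ r₂ * w ^ 2) = 0 := by
    have := congrArg σ E0
    simp only [map_add, map_mul, map_pow, map_zero, hσρ, hσw, hσC] at this
    linear_combination this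
  have E2 : ρ r₀ + C ω ^ 2 * (ρ r₁ * w) + C ω ^ 4 * (ρ r₂ * w ^ 2) = 0 := by
    have := congrArg σ E1
    simp only [map_add, map_mul, map_pow, map_zero, hσρ, hσw, hσC] at this
    linear_combination this
  have hωne : (C ω : MvPolynomial (Fin 2) k) - C ω ^ 2 ≠ 0 := by
    rw [← map_pow, ← map_sub]
    simp only [ne_eq, MvPolynomial.C_eq_zero, sub_eq_zero]
    intro heq
    rcases mul_eq_zero.mp (show ω * (ω - 1) = 0 by linear_combination -heq) with h' | h'
    · rw [h'] at hω; simp at hω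
    · have : ω = 1 := by linear_combination h'
      rw [this] at hω; norm_num at hω
  have hCω3 : (C ω : MvPolynomial (Fin 2) k) ^ 3 = 1 := by
    rw [← map_pow, hω3]; simp
  have hbc : ρ r₁ * w - ρ r₂ * w ^ 2 = 0 := by
    have hfac : (C ω - C ω ^ 2) * (ρ r₁ * w - ρ r₂ * w ^ 2) = 0 := by
      linear_combination E1 - E2 + (ρ r₂ * w ^ 2) * C ω * hCω3
    rcases mul_eq_zero.mp hfac with h' | h'
    · exact absurd h' hωne
    · exact h'
  have h3b : (3 : MvPolynomial (Fin 2) k) * (ρ r₁ * w) = 0 := by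
    linear_combination E0 - E1 + (1 - C ω ^ 2) * hbc + (ρ r₁ * w) * hCω
  have hb : ρ r₁ * w = 0 := by
    rcases mul_eq_zero.mp h3b with h' | h'
    · exact absurd h' (by norm_num)
    · exact h'
  have hwne : w ≠ 0 := by
    rw [hwdef]
    exact mul_ne_zero (pow_ne_zero _ (MvPolynomial.X_ne_zero _))
      (pow_ne_zero _ (MvPolynomial.X_ne_zero _))
  have hr1 : ρ r₁ = 0 := by
    rcases mul_eq_zero.mp hb with h' | h'
    · exact h'
    · exact absurd h' hwne
  have hc' : ρ r₂ * w ^ 2 = 0 := by linear_combination hb - hbc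
  have hr2 : ρ r₂ = 0 := by
    rcases mul_eq_zero.mp hc' with h' | h'
    · exact h'
    · exact absurd h' (pow_ne_zero _ hwne)
  have hr0 : ρ r₀ = 0 := by linear_combination E0 - w * hr1 - w ^ 2 * hr2
  exact ⟨stmt19_rho_inj _ hr0, stmt19_rho_inj _ hr1, stmt19_rho_inj _ hr2⟩

lemma stmt19_normal_form (p : MvPolynomial (Fin 3) k) :
    ∃ r₀ r₁ r₂ : MvPolynomial (Fin 2) k,
      p - (rename Fin.castSucc r₀ + rename Fin.castSucc r₁ * X 2
            + rename Fin.castSucc r₂ * X 2 ^ 2)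
        ∈ Ideal.span {(X 0 : MvPolynomial (Fin 3) k) * X 1 - X 2 ^ 3} := by
  set I := Ideal.span {(X 0 : MvPolynomial (Fin 3) k) * X 1 - X 2 ^ 3} with hI
  set e : MvPolynomial (Fin 2) k →ₐ[k] MvPolynomial (Fin 3) k :=
    (rename Fin.castSucc : MvPolynomial (Fin 2) k →ₐ[k] MvPolynomial (Fin 3) k) with he
  induction p using MvPolynomial.induction_on with
  | C a =>
      refine ⟨C a, 0, 0, ?_⟩
      simp only [map_zero, zero_mul, add_zero, rename_C]
      simpa using I.zero_mem
  | add p q hp hq =>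
      obtain ⟨a₀, a₁, a₂, ha⟩ := hp
      obtain ⟨b₀, b₁, b₂, hb⟩ := hq
      refine ⟨a₀ + b₀, a₁ + b₁, a₂ + b₂, ?_⟩
      have := I.add_mem ha hb
      convert this using 1
      simp only [map_add]
      ring
  | mul_X p i hp =>
      obtain ⟨a₀, a₁, a₂, ha⟩ := hp
      have hg : ((X 0 : MvPolynomial (Fin 3) k) * X 1 - X 2 ^ 3) ∈ I :=
        Ideal.subset_span rfl
      have h0 : (rename (Fin.castSucc) (X 0 : MvPolynomial (Fin 2) k)) =
          (X 0 : MvPolynomial (Fin 3) k) := by rw [rename_X]; rfl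
      have h1 : (rename (Fin.castSucc) (X 1 : MvPolynomial (Fin 2) k)) =
          (X 1 : MvPolynomial (Fin 3) k) := by rw [rename_X]; rfl
      fin_cases i
      · refine ⟨X 0 * a₀, X 0 * a₁, X 0 * a₂, ?_⟩
        have := I.mul_mem_right (X 0) ha
        convert this using 1
        simp only [map_mul, h0]
        ring_nf
        rw [he, h0]
        change p * X 0 - _ - _ - _ = _
        ring
      · refine ⟨X 1 * a₀, X 1 * a₁, X 1 * a₂, ?_⟩
        have := I.mul_mem_right (X 1) ha
        convert this using 1
        simp only [map_mul, h1]
        ring_nf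
        rw [he, h1]
        change p * X 1 - _ - _ - _ = _
        ring
      · refine ⟨X 0 * X 1 * a₂, a₀, a₁, ?_⟩
        have := I.sub_mem (I.mul_mem_right (X 2) ha)
          (I.mul_mem_left (rename Fin.castSucc a₂) hg)
        convert this using 1
        simp only [map_mul, h0, h1]
        ring_nf
        rw [he, h0, h1]
        change p * X 2 - _ - _ - _ = _
        ring

lemma stmt19_pi1_ker (p : MvPolynomial (Fin 3) k)
    (h : aeval ![(X 0 : MvPolynomial (Fin 2) k) ^ 6, X 1 ^ 6, X 0 ^ 2 * X 1 ^ 2] p = 0) :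
    p ∈ Ideal.span {(X 0 : MvPolynomial (Fin 3) k) * X 1 - X 2 ^ 3} := by
  set π : MvPolynomial (Fin 3) k →ₐ[k] MvPolynomial (Fin 2) k :=
    aeval ![(X 0 : MvPolynomial (Fin 2) k) ^ 6, X 1 ^ 6, X 0 ^ 2 * X 1 ^ 2] with hπ
  obtain ⟨r₀, r₁, r₂, hmem⟩ := stmt19_normal_form (k := k) p
  have hπg : π ((X 0 : MvPolynomial (Fin 3) k) * X 1 - X 2 ^ 3) = 0 := by
    rw [hπ]
    simp only [map_sub, map_mul, map_pow, aeval_X, Matrix.cons_val_zero, Matrix.cons_val_one,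
      Matrix.head_cons, Matrix.cons_val_two, Matrix.tail_cons]
    ring
  have hπdiff : π (p - (rename Fin.castSucc r₀ + rename Fin.castSucc r₁ * X 2
      + rename Fin.castSucc r₂ * X 2 ^ 2)) = 0 := by
    obtain ⟨c, hc⟩ := Ideal.mem_span_singleton'.mp hmem
    rw [← hc, map_mul, hπg, mul_zero]
  have hπe : ∀ r : MvPolynomial (Fin 2) k, π (rename Fin.castSucc r)
      = aeval ![(X 0 : MvPolynomial (Fin 2) k) ^ 6, X 1 ^ 6] r := by
    intro r
    rw [hπ, aeval_rename]
    have hfun : (![(X 0 : MvPolynomial (Fin 2) k) ^ 6, X 1 ^ 6, X 0 ^ 2 * X 1 ^ 2] ∘ Fin.castSucc)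
        = ![(X 0 : MvPolynomial (Fin 2) k) ^ 6, X 1 ^ 6] := by
      funext i; fin_cases i <;> rfl
    rw [hfun]
  have hπX2 : π (X 2) = (X 0 : MvPolynomial (Fin 2) k) ^ 2 * X 1 ^ 2 := by
    rw [hπ, aeval_X]; rfl
  have hNF : aeval ![(X 0 : MvPolynomial (Fin 2) k) ^ 6, X 1 ^ 6] r₀
      + aeval ![(X 0 : MvPolynomial (Fin 2) k) ^ 6, X 1 ^ 6] r₁ * (X 0 ^ 2 * X 1 ^ 2)
      + aeval ![(X 0 : MvPolynomial (Fin 2) k) ^ 6, X 1 ^ 6] r₂ * (X 0 ^ 2 * X 1 ^ 2) ^ 2 = 0 := by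
    have := hπdiff
    rw [map_sub, h, zero_sub, neg_eq_zero, map_add, map_add, map_mul, map_mul, map_pow,
      hπX2, hπe, hπe, hπe] at this
    exact this
  obtain ⟨h0, h1, h2⟩ := stmt19_indep (k := k) r₀ r₁ r₂ hNF
  rw [h0, h1, h2] at hmem
  simpa using hmem

end AuxCommutative

section Mat
variable (k : Type*) [Field k]

/-- Shorthand for `k[s,t]`. -/
abbrev SS (k : Type*) [Field k] := MvPolynomial (Fin 2) k
/-- 2×2 matrices over `k[s,t]`. -/
abbrev MM (k : Type*) [Field k] := Matrix (Fin 2) (Fin 2) (SS k)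

def Umat : MM k := !![0, X 0; X 1, 0]
def Vmat : MM k := !![0, X 1; X 0, 0]

lemma UU_eq_VV : Umat k * Umat k = Vmat k * Vmat k := by
  rw [Umat, Vmat, Matrix.mul_fin_two, Matrix.mul_fin_two]
  ring_nf

def phiA : RingQuot (uvRel k) →ₐ[k] MM k :=
  RingQuot.liftAlgHom k ⟨FreeAlgebra.lift k ![Umat k, Vmat k], by
    rintro p q ⟨rfl, rfl⟩
    simp only [map_mul, FreeAlgebra.lift_ι_apply]
    exact UU_eq_VV k⟩

lemma phiA_u : phiA k (RingQuot.mkAlgHom k (uvRel k) (FreeAlgebra.ι k 0)) = Umat k := by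
  rw [phiA, RingQuot.liftAlgHom_mkAlgHom_apply]
  simp [FreeAlgebra.lift_ι_apply]

lemma phiA_v : phiA k (RingQuot.mkAlgHom k (uvRel k) (FreeAlgebra.ι k 1)) = Vmat k := by
  rw [phiA, RingQuot.liftAlgHom_mkAlgHom_apply]
  simp [FreeAlgebra.lift_ι_apply]

lemma UV_diag : Umat k * Vmat k = Matrix.diagonal ![(X 0 : SS k) ^ 2, X 1 ^ 2] := by
  rw [Umat, Vmat, Matrix.mul_fin_two]
  ext i j
  fin_cases i <;> fin_cases j <;> simp [Matrix.diagonal] <;> ring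

lemma VU_diag : Vmat k * Umat k = Matrix.diagonal ![(X 1 : SS k) ^ 2, X 0 ^ 2] := by
  rw [Umat, Vmat, Matrix.mul_fin_two]
  ext i j
  fin_cases i <;> fin_cases j <;> simp [Matrix.diagonal] <;> ring

lemma U4_diag : Umat k ^ 4 = Matrix.diagonal ![(X 0 : SS k) ^ 2 * X 1 ^ 2, X 0 ^ 2 * X 1 ^ 2] := by
  have h2 : Umat k ^ 2 = Matrix.diagonal ![(X 0 : SS k) * X 1, X 1 * X 0] := by
    rw [pow_two, Umat, Matrix.mul_fin_two]
    ext i j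
    fin_cases i <;> fin_cases j <;> simp [Matrix.diagonal]
  rw [show (4:ℕ) = 2*2 from rfl, pow_mul, h2, Matrix.diagonal_pow]
  have hfun : (![(X 0 : SS k) * X 1, X 1 * X 0]) ^ 2
      = ![(X 0 : SS k) ^ 2 * X 1 ^ 2, X 0 ^ 2 * X 1 ^ 2] := by
    funext i
    fin_cases i <;> · simp [Pi.pow_apply]; ring
  rw [hfun]

end Mat

theorem stmt19_main (k : Type*) [Field k] [IsAlgClosed k] [CharZero k] :
    Commute (((RingQuot.mkAlgHom k (uvRel k) (FreeAlgebra.ι k 0)) *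
        (RingQuot.mkAlgHom k (uvRel k) (FreeAlgebra.ι k 1))) ^ 3)
      (((RingQuot.mkAlgHom k (uvRel k) (FreeAlgebra.ι k 1)) *
        (RingQuot.mkAlgHom k (uvRel k) (FreeAlgebra.ι k 0))) ^ 3) ∧
    Commute (((RingQuot.mkAlgHom k (uvRel k) (FreeAlgebra.ι k 0)) *
        (RingQuot.mkAlgHom k (uvRel k) (FreeAlgebra.ι k 1))) ^ 3)
      ((RingQuot.mkAlgHom k (uvRel k) (FreeAlgebra.ι k 0)) ^ 4) ∧
    Commute (((RingQuot.mkAlgHom k (uvRel k) (FreeAlgebra.ι k 1)) *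
        (RingQuot.mkAlgHom k (uvRel k) (FreeAlgebra.ι k 0))) ^ 3)
      ((RingQuot.mkAlgHom k (uvRel k) (FreeAlgebra.ι k 0)) ^ 4) ∧
    ((RingQuot.mkAlgHom k (uvRel k) (FreeAlgebra.ι k 0)) *
        (RingQuot.mkAlgHom k (uvRel k) (FreeAlgebra.ι k 1))) ^ 3 *
      ((RingQuot.mkAlgHom k (uvRel k) (FreeAlgebra.ι k 1)) *
        (RingQuot.mkAlgHom k (uvRel k) (FreeAlgebra.ι k 0))) ^ 3
      = ((RingQuot.mkAlgHom k (uvRel k) (FreeAlgebra.ι k 0)) ^ 4) ^ 3 ∧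
    ∃ f : (MvPolynomial (Fin 3) k ⧸
            Ideal.span {MvPolynomial.X 0 * MvPolynomial.X 1 - MvPolynomial.X 2 ^ 3}) ≃ₐ[k]
          Algebra.adjoin k
            ({((RingQuot.mkAlgHom k (uvRel k) (FreeAlgebra.ι k 0)) *
                (RingQuot.mkAlgHom k (uvRel k) (FreeAlgebra.ι k 1))) ^ 3,
              ((RingQuot.mkAlgHom k (uvRel k) (FreeAlgebra.ι k 1)) *
                (RingQuot.mkAlgHom k (uvRel k) (FreeAlgebra.ι k 0))) ^ 3,
              (RingQuot.mkAlgHom k (uvRel k) (FreeAlgebra.ι k 0)) ^ 4} :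
              Set (RingQuot (uvRel k))),
      ((f (Ideal.Quotient.mk _ (MvPolynomial.X 0)) : RingQuot (uvRel k))
          = ((RingQuot.mkAlgHom k (uvRel k) (FreeAlgebra.ι k 0)) *
              (RingQuot.mkAlgHom k (uvRel k) (FreeAlgebra.ι k 1))) ^ 3 ∧
       (f (Ideal.Quotient.mk _ (MvPolynomial.X 1)) : RingQuot (uvRel k))
          = ((RingQuot.mkAlgHom k (uvRel k) (FreeAlgebra.ι k 1)) *
              (RingQuot.mkAlgHom k (uvRel k) (FreeAlgebra.ι k 0))) ^ 3 ∧
       (f (Ideal.Quotient.mk _ (MvPolynomial.X 2)) : RingQuot (uvRel k))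
          = (RingQuot.mkAlgHom k (uvRel k) (FreeAlgebra.ι k 0)) ^ 4) := by
  set u : RingQuot (uvRel k) := RingQuot.mkAlgHom k (uvRel k) (FreeAlgebra.ι k 0) with hu
  set v : RingQuot (uvRel k) := RingQuot.mkAlgHom k (uvRel k) (FreeAlgebra.ι k 1) with hv
  -- the defining relation
  have huv : u * u = v * v := by
    have h := RingQuot.mkAlgHom_rel k
      (s := uvRel k) (x := FreeAlgebra.ι k 0 * FreeAlgebra.ι k 0)
      (y := FreeAlgebra.ι k 1 * FreeAlgebra.ι k 1) ⟨rfl, rfl⟩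
    simpa [map_mul] using h
  have key1 : (u * v) * (v * u) = u ^ 4 := by
    have h1 : (u * v) * (v * u) = u * (v * v) * u := by noncomm_ring
    rw [h1, ← huv]; noncomm_ring
  have key2 : (v * u) * (u * v) = u ^ 4 := by
    have h1 : (v * u) * (u * v) = v * (u * u) * v := by noncomm_ring
    have h2 : v * (v * v) * v = (v * v) * (v * v) := by noncomm_ring
    rw [h1, huv, h2, ← huv]; noncomm_ring
  have hc : Commute (u * v) (v * u) := by
    unfold Commute SemiconjBy
    rw [key1, key2]
  have c2 : Commute ((u * v) ^ 3) (u ^ 4) := by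
    rw [← key1]
    exact ((Commute.refl (u * v)).mul_right hc).pow_left 3
  have c3 : Commute ((v * u) ^ 3) (u ^ 4) := by
    rw [← key1]
    exact (hc.symm.mul_right (Commute.refl (v * u))).pow_left 3
  have eq4 : (u * v) ^ 3 * (v * u) ^ 3 = (u ^ 4) ^ 3 := by
    rw [← key1]
    exact (hc.mul_pow 3).symm
  refine ⟨hc.pow_pow 3 3, c2, c3, eq4, ?_⟩
  -- the subalgebra generated by the three elements, with its commutative ring structure
  have hcomm : ∀ a ∈ ({(u * v) ^ 3, (v * u) ^ 3, u ^ 4} : Set (RingQuot (uvRel k))),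
      ∀ b ∈ ({(u * v) ^ 3, (v * u) ^ 3, u ^ 4} : Set (RingQuot (uvRel k))), a * b = b * a := by
    rintro a (rfl | rfl | rfl) b (rfl | rfl | rfl)
    · rfl
    · exact hc.pow_pow 3 3
    · exact c2
    · exact (hc.pow_pow 3 3).symm
    · rfl
    · exact c3
    · exact c2.symm
    · exact c3.symm
    · rfl
  set T := Algebra.adjoin k ({(u * v) ^ 3, (v * u) ^ 3, u ^ 4} : Set (RingQuot (uvRel k))) with hT
  letI : CommSemiring T := Algebra.adjoinCommSemiringOfComm k hcomm
  have hmem1 : (u * v) ^ 3 ∈ T := Algebra.subset_adjoin (Or.inl rfl)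
  have hmem2 : (v * u) ^ 3 ∈ T := Algebra.subset_adjoin (Or.inr (Or.inl rfl))
  have hmem3 : u ^ 4 ∈ T := Algebra.subset_adjoin (Or.inr (Or.inr rfl))
  set G : MvPolynomial (Fin 3) k →ₐ[k] T :=
    aeval (R := k) ![(⟨(u * v) ^ 3, hmem1⟩ : T), (⟨(v * u) ^ 3, hmem2⟩ : T), (⟨u ^ 4, hmem3⟩ : T)] with hG
  set F : MvPolynomial (Fin 3) k →ₐ[k] RingQuot (uvRel k) := T.val.comp G with hF
  have hGX0 : G (X 0) = ⟨(u * v) ^ 3, hmem1⟩ := by rw [hG, aeval_X]; rfl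
  have hGX1 : G (X 1) = ⟨(v * u) ^ 3, hmem2⟩ := by rw [hG, aeval_X]; rfl
  have hGX2 : G (X 2) = ⟨u ^ 4, hmem3⟩ := by rw [hG, aeval_X]; rfl
  have hFX0 : F (X 0) = (u * v) ^ 3 := by rw [hF, AlgHom.comp_apply, hGX0]; rfl
  have hFX1 : F (X 1) = (v * u) ^ 3 := by rw [hF, AlgHom.comp_apply, hGX1]; rfl
  have hFX2 : F (X 2) = u ^ 4 := by rw [hF, AlgHom.comp_apply, hGX2]; rfl
  -- the diagonal decomposition via 2×2 matrices
  set π₁ : MvPolynomial (Fin 3) k →ₐ[k] SS k :=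
    aeval ![(X 0 : SS k) ^ 6, X 1 ^ 6, X 0 ^ 2 * X 1 ^ 2] with hπ₁
  set π₂ : MvPolynomial (Fin 3) k →ₐ[k] SS k :=
    aeval ![(X 1 : SS k) ^ 6, X 0 ^ 6, X 0 ^ 2 * X 1 ^ 2] with hπ₂
  have hφu : phiA k u = Umat k := phiA_u k
  have hφv : phiA k v = Vmat k := phiA_v k
  have hdiag : ∀ p, phiA k (F p) = Matrix.diagonal ![π₁ p, π₂ p] := by
    have comp_eq : (phiA k).comp F
        = (Matrix.diagonalAlgHom k).comp (Pi.algHom k _ ![π₁, π₂]) := by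
      apply MvPolynomial.algHom_ext
      intro i
      fin_cases i
      · show phiA k (F (X 0)) = Matrix.diagonalAlgHom k (fun j => ![π₁, π₂] j (X 0))
        rw [hFX0, map_pow, map_mul, hφu, hφv, UV_diag, Matrix.diagonal_pow]
        have h1 : (![(X 0 : SS k) ^ 2, X 1 ^ 2]) ^ 3 = ![(X 0 : SS k) ^ 6, X 1 ^ 6] := by
          funext j; fin_cases j <;> · simp [Pi.pow_apply]; ring
        have h2 : (fun j => ![π₁, π₂] j (X 0)) = ![(X 0 : SS k) ^ 6, X 1 ^ 6] := by
          funext j; fin_cases j <;> simp [hπ₁, hπ₂]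
        rw [h1]
        show _ = Matrix.diagonal _
        rw [h2]
      · show phiA k (F (X 1)) = Matrix.diagonalAlgHom k (fun j => ![π₁, π₂] j (X 1))
        rw [hFX1, map_pow, map_mul, hφu, hφv, VU_diag, Matrix.diagonal_pow]
        have h1 : (![(X 1 : SS k) ^ 2, X 0 ^ 2]) ^ 3 = ![(X 1 : SS k) ^ 6, X 0 ^ 6] := by
          funext j; fin_cases j <;> · simp [Pi.pow_apply]; ring
        have h2 : (fun j => ![π₁, π₂] j (X 1)) = ![(X 1 : SS k) ^ 6, X 0 ^ 6] := by
          funext j; fin_cases j <;> simp [hπ₁, hπ₂]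
        rw [h1]
        show _ = Matrix.diagonal _
        rw [h2]
      · show phiA k (F (X 2)) = Matrix.diagonalAlgHom k (fun j => ![π₁, π₂] j (X 2))
        rw [hFX2, map_pow, hφu, U4_diag]
        have h2 : (fun j => ![π₁, π₂] j (X 2))
            = ![(X 0 : SS k) ^ 2 * X 1 ^ 2, X 0 ^ 2 * X 1 ^ 2] := by
          funext j; fin_cases j <;> simp [hπ₁, hπ₂]
        show _ = Matrix.diagonal _
        rw [h2]
    intro p
    have := AlgHom.congr_fun comp_eq p
    simp only [AlgHom.comp_apply] at this
    rw [this]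
    show Matrix.diagonal _ = _
    congr 1
    funext j
    fin_cases j <;> rfl
  -- kernel computation
  have hkerF : RingHom.ker G
      = Ideal.span {(X 0 : MvPolynomial (Fin 3) k) * X 1 - X 2 ^ 3} := by
    apply le_antisymm
    · intro p hp
      have hGp : G p = 0 := RingHom.mem_ker.mp hp
      have hFp : F p = 0 := by rw [hF, AlgHom.comp_apply, hGp, map_zero]
      have h1 : Matrix.diagonal ![π₁ p, π₂ p] = (0 : MM k) := by
        rw [← hdiag p, hFp, map_zero]
      have hπ1p : π₁ p = 0 := by
        have := congrFun (congrFun h1 0) 0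
        simpa [Matrix.diagonal] using this
      exact stmt19_pi1_ker p hπ1p
    · rw [Ideal.span_le, Set.singleton_subset_iff]
      refine RingHom.mem_ker.mpr ?_
      have hFg : F (X 0 * X 1 - X 2 ^ 3) = 0 := by
        rw [map_sub, map_mul, map_pow, hFX0, hFX1, hFX2, eq4, sub_self]
      have : T.val (G (X 0 * X 1 - X 2 ^ 3)) = 0 := hFg
      exact Subtype.ext (by simpa using this)
  -- surjectivity of G
  have hGsurj : Function.Surjective G := by
    have hrange : Algebra.adjoin k ({(u * v) ^ 3, (v * u) ^ 3, u ^ 4} : Set (RingQuot (uvRel k))) ≤ F.range := by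
      apply Algebra.adjoin_le
      rintro x (rfl | rfl | rfl)
      · exact ⟨X 0, hFX0⟩
      · exact ⟨X 1, hFX1⟩
      · exact ⟨X 2, hFX2⟩
    rintro ⟨x, hx⟩
    obtain ⟨p, hp⟩ := hrange hx
    exact ⟨p, Subtype.ext hp⟩
  -- assemble the isomorphism
  let E1 := Ideal.quotientEquivAlgOfEq k hkerF.symm
  let E2 := Ideal.quotientKerAlgEquivOfSurjective hGsurj
  refine ⟨E1.trans E2, ?_, ?_, ?_⟩
  · show ((E2 (E1 (Ideal.Quotient.mk _ (X 0))) : T) : RingQuot (uvRel k)) = (u * v) ^ 3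
    have h1 : E1 (Ideal.Quotient.mk _ (X 0)) = Ideal.Quotient.mk _ (X 0) := by
      rw [Ideal.quotientEquivAlgOfEq_mk]
    rw [h1]
    have h2 : E2 (Ideal.Quotient.mk _ (X 0)) = G (X 0) := rfl
    rw [h2, hGX0]
  · show ((E2 (E1 (Ideal.Quotient.mk _ (X 1))) : T) : RingQuot (uvRel k)) = (v * u) ^ 3
    have h1 : E1 (Ideal.Quotient.mk _ (X 1)) = Ideal.Quotient.mk _ (X 1) := by
      rw [Ideal.quotientEquivAlgOfEq_mk]
    rw [h1]
    have h2 : E2 (Ideal.Quotient.mk _ (X 1)) = G (X 1) := rfl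
    rw [h2, hGX1]
  · show ((E2 (E1 (Ideal.Quotient.mk _ (X 2))) : T) : RingQuot (uvRel k)) = u ^ 4
    have h1 : E1 (Ideal.Quotient.mk _ (X 2)) = Ideal.Quotient.mk _ (X 2) := by
      rw [Ideal.quotientEquivAlgOfEq_mk]
    rw [h1]
    have h2 : E2 (Ideal.Quotient.mk _ (X 2)) = G (X 2) := rfl
    rw [h2, hGX2]

/-- In `A = k⟨u,v⟩/⟨u² - v²⟩`, the elements `(uv)³`, `(vu)³`, `u⁴` pairwise
commute and satisfy `(uv)³(vu)³ = (u⁴)³`, and `k[x,y,z]/⟨xy - z³⟩` is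
isomorphic to the subalgebra of `A` they generate, via `x ↦ (uv)³`,
`y ↦ (vu)³`, `z ↦ u⁴`. -/
theorem stmt_19 (k : Type*) [Field k] [IsAlgClosed k] [CharZero k] :
    let A := RingQuot (uvRel k)
    let u : A := RingQuot.mkAlgHom k (uvRel k) (FreeAlgebra.ι k 0)
    let v : A := RingQuot.mkAlgHom k (uvRel k) (FreeAlgebra.ι k 1)
    Commute ((u * v) ^ 3) ((v * u) ^ 3) ∧
    Commute ((u * v) ^ 3) (u ^ 4) ∧
    Commute ((v * u) ^ 3) (u ^ 4) ∧
    (u * v) ^ 3 * (v * u) ^ 3 = (u ^ 4) ^ 3 ∧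
    ∃ f : (MvPolynomial (Fin 3) k ⧸
            Ideal.span {MvPolynomial.X 0 * MvPolynomial.X 1 - MvPolynomial.X 2 ^ 3}) ≃ₐ[k]
          Algebra.adjoin k ({(u * v) ^ 3, (v * u) ^ 3, u ^ 4} : Set A),
      ((f (Ideal.Quotient.mk _ (MvPolynomial.X 0)) : A) = (u * v) ^ 3 ∧
       (f (Ideal.Quotient.mk _ (MvPolynomial.X 1)) : A) = (v * u) ^ 3 ∧
       (f (Ideal.Quotient.mk _ (MvPolynomial.X 2)) : A) = u ^ 4) := by
  intro A u v
  exact stmt19_main k
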